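/- (Edge count identity, equation (17).) Let V be a finite set, θ : V → ℝ with θ_i ≥ 0 for all i, and let D ⊆ V satisfy Σ_{i∈V∖D} θ_i ≥ Σ_{i∈D} θ_i. For S ⊆ V define E(S) = Σ_{i<j, i,j∈S} θ_i·θ_j and E(D,−D) = Σ_{i∈D} Σ_{j∈V∖D} θ_i·θ_j. Then E(D) = (1/4)·( √(E(V) + (1/2)·Σ_{i∈V} θ_i²) − √(E(V) + (1/2)·Σ_{i∈V} θ_i² − 2·E(D,−D)) )² − (1/2)·Σ_{i∈D} θ_i². -/

import Mathlib

open Finset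

namespace EdgeCountIdentity

/-- `E(S) = Σ_{i<j ∈ S} θ_i θ_j`, written on an arbitrary finite vertex set as half the
sum over ordered pairs of distinct vertices of `S`. -/
noncomputable def pairSum {V : Type*} [DecidableEq V] (θ : V → ℝ) (S : Finset V) : ℝ :=
  (∑ q ∈ S.offDiag, θ q.1 * θ q.2) / 2

/-- `E(D, -D) = Σ_{i ∈ D, j ∉ D} θ_i θ_j`. -/
noncomputable def crossSum {V : Type*} [Fintype V] [DecidableEq V] (θ : V → ℝ)
    (D : Finset V) : ℝ :=
  ∑ i ∈ D, ∑ j ∈ Dᶜ, θ i * θ j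

lemma pairSum_eq {V : Type*} [DecidableEq V] (θ : V → ℝ) (S : Finset V) :
    pairSum θ S = ((∑ i ∈ S, θ i)^2 - ∑ i ∈ S, (θ i)^2) / 2 := by
  unfold pairSum
  congr 1
  have h1 : (∑ i ∈ S, θ i)^2 = ∑ p ∈ S ×ˢ S, θ p.1 * θ p.2 := by
    rw [sq, Finset.sum_mul_sum, Finset.sum_product]
  have h2 : S ×ˢ S = S.diag ∪ S.offDiag := (Finset.diag_union_offDiag S).symm
  rw [h1, h2, Finset.sum_union (Finset.disjoint_diag_offDiag S), Finset.sum_diag]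
  simp [sq]

/-- **Edge count identity (equation (17)).** -/
theorem edge_count_identity {V : Type*} [Fintype V] [DecidableEq V]
    (θ : V → ℝ) (hθ : ∀ i, 0 ≤ θ i) (D : Finset V)
    (hbal : ∑ i ∈ D, θ i ≤ ∑ i ∈ Dᶜ, θ i) :
    pairSum θ D =
      (Real.sqrt (pairSum θ Finset.univ + (∑ i, (θ i)^2) / 2) -
        Real.sqrt (pairSum θ Finset.univ + (∑ i, (θ i)^2) / 2 - 2 * crossSum θ D))^2 / 4 -
      (∑ i ∈ D, (θ i)^2) / 2 := by
  set a := ∑ i ∈ D, θ i with ha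
  set b := ∑ i ∈ Dᶜ, θ i with hb
  have ha0 : 0 ≤ a := Finset.sum_nonneg fun i _ => hθ i
  have hb0 : 0 ≤ b := Finset.sum_nonneg fun i _ => hθ i
  have hsplit : ∑ i, θ i = a + b := by
    rw [ha, hb, ← Finset.sum_union (disjoint_compl_right), Finset.union_compl]
  have hcross : crossSum θ D = a * b := by
    rw [crossSum, ha, hb, ← Finset.sum_mul_sum]
  have hst : Real.sqrt 2 ^ 2 = 2 := Real.sq_sqrt (by norm_num)
  have hs2 : (0:ℝ) < Real.sqrt 2 := Real.sqrt_pos.2 (by norm_num)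
  have huniv : pairSum θ Finset.univ + (∑ i, (θ i)^2) / 2 = ((a+b)/Real.sqrt 2)^2 := by
    rw [pairSum_eq, hsplit]
    field_simp
    rw [hst]
    ring
  have h1 : Real.sqrt (pairSum θ Finset.univ + (∑ i, (θ i)^2) / 2) = (a+b)/Real.sqrt 2 := by
    rw [huniv, Real.sqrt_sq (by positivity)]
  have h2 : Real.sqrt (pairSum θ Finset.univ + (∑ i, (θ i)^2) / 2 - 2 * crossSum θ D)
      = (b-a)/Real.sqrt 2 := by
    have : pairSum θ Finset.univ + (∑ i, (θ i)^2) / 2 - 2 * crossSum θ D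
        = ((b-a)/Real.sqrt 2)^2 := by
      rw [huniv, hcross]
      field_simp
      rw [hst]
      ring
    rw [this, Real.sqrt_sq (div_nonneg (sub_nonneg.2 hbal) hs2.le)]
  rw [h1, h2, pairSum_eq]
  field_simp
  rw [hst, ← ha]
  ring
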